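/- Let H_X ∈ F_2^{r_X×n}, H_Z ∈ F_2^{s_Z×n}, H_X' ∈ F_2^{r_X'×n'}, H_Z' ∈ F_2^{s_Z'×n'} satisfy H_Z H_X^T = 0 and H_Z' (H_X')^T = 0. Let ∂_1 ∈ F_2^{n_A×r_A} and ∂_0 ∈ F_2^{s_A×n_A} satisfy ∂_0 ∂_1 = 0 and ker(∂_1^T) = im(∂_0^T). Let f_1 ∈ F_2^{n×r_A}, f_0 ∈ F_2^{s_Z×n_A}, f_1' ∈ F_2^{n'×r_A}, f_0' ∈ F_2^{s_Z'×n_A} satisfy H_Z f_1 = f_0 ∂_1 and H_Z' f_1' = f_0' ∂_1. Assume there exist v_1,…,v_k ∈ ker(∂_1) such that f_1 v_1,…,f_1 v_k project to a basis of ker(H_Z)/im(H_X^T) and f_1' v_1,…,f_1' v_k project to a basis of ker(H_Z')/im((H_X')^T). Form the merged check matrices H̃_X = [[H_X, 0, 0],[f_1^T, ∂_1^T, (f_1')^T],[0, 0, H_X']] and H̃_Z = [[H_Z, f_0, 0],[0, ∂_0, 0],[0, f_0', H_Z']], acting on F_2^{n+n_A+n'}. Then every v ∈ F_2^{n+n_A+n'}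 with H̃_X v = 0 and v ∉ im(H̃_Z^T) satisfies |v| ≥ d_Z + d_Z', where d_Z := min{|u| : H_X u = 0, u ∉ im(H_Z^T)} and d_Z' := min{|u'| : H_X' u' = 0, u' ∉ im((H_Z')^T)}. In other words, the Z-distance of the merged (cone) code is at least the sum of the Z-distances of the two constituent CSS codes. -/

import Mathlib

open Matrix
private lemma char2_cancel : ∀ x y z w : ZMod 2, w = z + x + y → x + w + y = z := by decide

private lemma char2_eq : ∀ x y : ZMod 2, x + y = 0 → x = y := by decide

private lemma dp_sum {n : ℕ} {ι : Type*} (s : Finset ι) (x : Fin n → ZMod 2)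
    (f : ι → (Fin n → ZMod 2)) : x ⬝ᵥ (∑ i ∈ s, f i) = ∑ i ∈ s, x ⬝ᵥ f i := by
  classical
  induction s using Finset.induction with
  | empty => simp
  | insert _ _ h ih => simp [Finset.sum_insert h, dotProduct_add, ih]

private lemma hn_elim {α β : Type*} [Fintype α] [Fintype β] (f : α → ZMod 2) (g : β → ZMod 2) :
    hammingNorm (Sum.elim f g) = hammingNorm f + hammingNorm g := by
  classical
  simp only [hammingNorm, Finset.card_filter, Fintype.sum_sum_type, Sum.elim_inl, Sum.elim_inr]
  congr

private lemma perp_ker {m n : ℕ} (M : Matrix (Fin m) (Fin n) (ZMod 2))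
    (x : Fin n → ZMod 2) (h : ∀ y, M.mulVec y = 0 → x ⬝ᵥ y = 0) :
    ∃ μ, Mᵀ.mulVec μ = x := by
  classical
  let φ : (Fin n → ZMod 2) →ₗ[ZMod 2] ZMod 2 :=
    { toFun := fun y => x ⬝ᵥ y
      map_add' := fun y z => dotProduct_add x y z
      map_smul' := fun c y => by simp [dotProduct_smul] }
  let f := M.mulVecLin
  have hker : LinearMap.ker f ≤ LinearMap.ker φ := by
    intro y hy
    simp only [LinearMap.mem_ker, f, Matrix.mulVecLin_apply] at hy ⊢
    exact h y hy
  let ψ₁ := (LinearMap.ker f).liftQ φ hker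
  let ψ₀ : LinearMap.range f →ₗ[ZMod 2] ZMod 2 := ψ₁ ∘ₗ (f.quotKerEquivRange).symm.toLinearMap
  obtain ⟨ψ, hψ⟩ := ψ₀.exists_extend
  have key : ∀ v, φ v = ψ (f v) := by
    intro v
    have h1 : f.quotKerEquivRange (Submodule.Quotient.mk v) = ⟨f v, ⟨v, rfl⟩⟩ :=
      Subtype.ext (f.quotKerEquivRange_apply_mk v)
    have h2 : (f.quotKerEquivRange).symm ⟨f v, ⟨v, rfl⟩⟩ = Submodule.Quotient.mk v := by
      rw [← h1]; exact (f.quotKerEquivRange).symm_apply_apply _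
    have h3 : ψ (f v) = ψ₀ ⟨f v, ⟨v, rfl⟩⟩ := by rw [← hψ]; rfl
    rw [h3]
    show φ v = ψ₁ ((f.quotKerEquivRange).symm ⟨f v, ⟨v, rfl⟩⟩)
    rw [h2]
    rfl
  refine ⟨fun j => ψ (Pi.single j 1), ?_⟩
  have hdot : ∀ w : Fin m → ZMod 2, (fun j => ψ (Pi.single j 1)) ⬝ᵥ w = ψ w := by
    intro w
    rw [LinearMap.pi_apply_eq_sum_univ ψ w]
    simp only [dotProduct]
    congr 1
    ext j
    rw [mul_comm]
    congr 2
    ext i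
    simp [Pi.single_apply, eq_comm]
  funext i
  have hk := key (Pi.single i 1)
  have hφ : φ (Pi.single i 1) = x i := by
    show x ⬝ᵥ Pi.single i 1 = x i
    simp
  have hr : (Mᵀ.mulVec fun j => ψ (Pi.single j 1)) i
      = (fun j => ψ (Pi.single j 1)) ⬝ᵥ M.mulVec (Pi.single i 1) := by
    rw [Matrix.dotProduct_mulVec, Matrix.mulVec_transpose]
    simp
  rw [hr, hdot]
  exact hk.symm.trans hφ


/-- **Z-distance of the merged (cone) code (Lemma: distance_merged_code, Z part).**
Two CSS codes `(H_X, H_Z)` on `n` qubits and `(H_X', H_Z')` on `n'` qubits are merged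
through an adapter `(∂₁, ∂₀)` with `∂₀∂₁ = 0`, `ker ∂₁ᵀ = im ∂₀ᵀ`, commuting squares
`H_Z f₁ = f₀ ∂₁`, `H_Z' f₁' = f₀' ∂₁`, and vectors `v₁, …, v_k ∈ ker ∂₁` such that
`f₁ v_i` (resp. `f₁' v_i`) project to a basis of `ker H_Z / im H_Xᵀ`
(resp. `ker H_Z' / im H_X'ᵀ`).  Then every Z-logical of the merged code
`H̃_X = [[H_X,0,0],[f₁ᵀ,∂₁ᵀ,f₁'ᵀ],[0,0,H_X']]`, `H̃_Z = [[H_Z,f₀,0],[0,∂₀,0],[0,f₀',H_Z']]`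
has weight at least `d_Z + d_Z'`. -/
theorem stmt_8 (n nA n' rX sZ rX' sZ' sA rA k : ℕ)
    (HX : Matrix (Fin rX) (Fin n) (ZMod 2)) (HZ : Matrix (Fin sZ) (Fin n) (ZMod 2))
    (HX' : Matrix (Fin rX') (Fin n') (ZMod 2)) (HZ' : Matrix (Fin sZ') (Fin n') (ZMod 2))
    (d1 : Matrix (Fin nA) (Fin rA) (ZMod 2)) (d0 : Matrix (Fin sA) (Fin nA) (ZMod 2))
    (f1 : Matrix (Fin n) (Fin rA) (ZMod 2)) (f0 : Matrix (Fin sZ) (Fin nA) (ZMod 2))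
    (f1' : Matrix (Fin n') (Fin rA) (ZMod 2)) (f0' : Matrix (Fin sZ') (Fin nA) (ZMod 2))
    (hcss : HZ * HXᵀ = 0) (hcss' : HZ' * HX'ᵀ = 0)
    (hchain : d0 * d1 = 0)
    (hexact : LinearMap.ker (Matrix.mulVecLin d1ᵀ) = LinearMap.range (Matrix.mulVecLin d0ᵀ))
    (hcomm : HZ * f1 = f0 * d1) (hcomm' : HZ' * f1' = f0' * d1)
    (vb : Fin k → (Fin rA → ZMod 2))
    (hvker : ∀ i, d1.mulVec (vb i) = 0)
    (hmem : ∀ i, HZ.mulVec (f1.mulVec (vb i)) = 0)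
    (hmem' : ∀ i, HZ'.mulVec (f1'.mulVec (vb i)) = 0)
    (hspan : ∀ u : Fin n → ZMod 2, HZ.mulVec u = 0 →
      ∃ (lam : Fin k → ZMod 2) (w : Fin rX → ZMod 2),
        u = (∑ i, lam i • f1.mulVec (vb i)) + HXᵀ.mulVec w)
    (hindep : ∀ (lam : Fin k → ZMod 2) (w : Fin rX → ZMod 2),
      (∑ i, lam i • f1.mulVec (vb i)) = HXᵀ.mulVec w → lam = 0)
    (hspan' : ∀ u : Fin n' → ZMod 2, HZ'.mulVec u = 0 →
      ∃ (lam : Fin k → ZMod 2) (w : Fin rX' → ZMod 2),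
        u = (∑ i, lam i • f1'.mulVec (vb i)) + HX'ᵀ.mulVec w)
    (hindep' : ∀ (lam : Fin k → ZMod 2) (w : Fin rX' → ZMod 2),
      (∑ i, lam i • f1'.mulVec (vb i)) = HX'ᵀ.mulVec w → lam = 0) :
    ∀ v : (Fin n ⊕ Fin nA) ⊕ Fin n' → ZMod 2,
      (Matrix.fromBlocks (Matrix.fromBlocks HX 0 f1ᵀ d1ᵀ)
          (Matrix.fromRows (0 : Matrix (Fin rX) (Fin n') (ZMod 2)) f1'ᵀ)
          (Matrix.fromCols (0 : Matrix (Fin rX') (Fin n) (ZMod 2))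
            (0 : Matrix (Fin rX') (Fin nA) (ZMod 2))) HX').mulVec v = 0 →
      (¬ ∃ u : (Fin sZ ⊕ Fin sA) ⊕ Fin sZ' → ZMod 2,
        (Matrix.fromBlocks (Matrix.fromBlocks HZ f0 0 d0)
            (Matrix.fromRows (0 : Matrix (Fin sZ) (Fin n') (ZMod 2))
              (0 : Matrix (Fin sA) (Fin n') (ZMod 2)))
            (Matrix.fromCols (0 : Matrix (Fin sZ') (Fin n) (ZMod 2)) f0')
            HZ')ᵀ.mulVec u = v) →
      sInf {t | ∃ u : Fin n → ZMod 2, HX.mulVec u = 0 ∧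
          (¬ ∃ μ : Fin sZ → ZMod 2, HZᵀ.mulVec μ = u) ∧ hammingNorm u = t} +
        sInf {t | ∃ u : Fin n' → ZMod 2, HX'.mulVec u = 0 ∧
          (¬ ∃ μ : Fin sZ' → ZMod 2, HZ'ᵀ.mulVec μ = u) ∧ hammingNorm u = t}
        ≤ hammingNorm v := by
  intro v hXv hnotim
  classical
  set a : Fin n → ZMod 2 := fun i => v (Sum.inl (Sum.inl i)) with ha_def
  set b : Fin nA → ZMod 2 := fun i => v (Sum.inl (Sum.inr i)) with hb_def
  set c : Fin n' → ZMod 2 := fun i => v (Sum.inr i) with hc_def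
  have hv : v = Sum.elim (Sum.elim a b) c := by
    funext x
    rcases x with (x | x) | x <;> rfl
  rw [hv] at hXv
  have eq1 : HX *ᵥ a = 0 := by
    funext i
    have h := congrFun hXv (Sum.inl (Sum.inl i))
    simpa [Matrix.fromBlocks_mulVec, Matrix.fromRows_mulVec,
      Matrix.fromCols_mulVec_sumElim, Matrix.zero_mulVec] using h
  have eq3 : HX' *ᵥ c = 0 := by
    funext i
    have h := congrFun hXv (Sum.inr i)
    simpa [Matrix.fromBlocks_mulVec, Matrix.fromRows_mulVec,
      Matrix.fromCols_mulVec_sumElim, Matrix.zero_mulVec] using h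
  have eq2 : f1ᵀ *ᵥ a + d1ᵀ *ᵥ b + f1'ᵀ *ᵥ c = 0 := by
    funext i
    have h := congrFun hXv (Sum.inl (Sum.inr i))
    simp only [Matrix.fromBlocks_mulVec, Matrix.fromRows_mulVec,
      Matrix.fromCols_mulVec_sumElim, Matrix.zero_mulVec, Pi.add_apply,
      Sum.elim_inl, Sum.elim_inr, Pi.zero_apply, Sum.elim_comp_inl, Sum.elim_comp_inr] at h ⊢
    linear_combination h
  -- key pairing identity
  have keyε : ∀ i, (f1 *ᵥ vb i) ⬝ᵥ a = (f1' *ᵥ vb i) ⬝ᵥ c := by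
    intro i
    have h0 : vb i ⬝ᵥ (f1ᵀ *ᵥ a + d1ᵀ *ᵥ b + f1'ᵀ *ᵥ c) = 0 := by
      rw [eq2]; simp
    rw [dotProduct_add, dotProduct_add, Matrix.dotProduct_mulVec, Matrix.dotProduct_mulVec,
      Matrix.dotProduct_mulVec, Matrix.vecMul_transpose, Matrix.vecMul_transpose,
      Matrix.vecMul_transpose, hvker i, zero_dotProduct, add_zero] at h0
    exact char2_eq _ _ h0
  by_cases hc : ∀ i, (f1 *ᵥ vb i) ⬝ᵥ a = 0
  · -- trivial case : v is in the image, contradiction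
    exfalso
    apply hnotim
    have ha : ∃ μ, HZᵀ *ᵥ μ = a := by
      apply perp_ker
      intro y hy
      obtain ⟨lam, w, rfl⟩ := hspan y hy
      rw [dotProduct_add, dp_sum]
      have hz : ∀ i, a ⬝ᵥ (lam i • (f1 *ᵥ vb i)) = 0 := by
        intro i
        rw [dotProduct_smul, dotProduct_comm, hc i, smul_zero]
      rw [Finset.sum_congr rfl fun i _ => hz i, Finset.sum_const_zero,
        Matrix.dotProduct_mulVec, Matrix.vecMul_transpose, eq1, zero_dotProduct, add_zero]
    have hcc : ∃ μ', HZ'ᵀ *ᵥ μ' = c := by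
      apply perp_ker
      intro y hy
      obtain ⟨lam, w, rfl⟩ := hspan' y hy
      rw [dotProduct_add, dp_sum]
      have hz : ∀ i, c ⬝ᵥ (lam i • (f1' *ᵥ vb i)) = 0 := by
        intro i
        rw [dotProduct_smul, dotProduct_comm, ← keyε i, hc i, smul_zero]
      rw [Finset.sum_congr rfl fun i _ => hz i, Finset.sum_const_zero,
        Matrix.dotProduct_mulVec, Matrix.vecMul_transpose, eq3, zero_dotProduct, add_zero]
    obtain ⟨μ, hμ⟩ := ha
    obtain ⟨μ', hμ'⟩ := hcc
    have hmid : d1ᵀ *ᵥ (b + f0ᵀ *ᵥ μ + f0'ᵀ *ᵥ μ') = 0 := by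
      have e1 : d1ᵀ *ᵥ (f0ᵀ *ᵥ μ) = f1ᵀ *ᵥ a := by
        rw [Matrix.mulVec_mulVec, ← Matrix.transpose_mul, ← hcomm, Matrix.transpose_mul,
          ← Matrix.mulVec_mulVec, hμ]
      have e2 : d1ᵀ *ᵥ (f0'ᵀ *ᵥ μ') = f1'ᵀ *ᵥ c := by
        rw [Matrix.mulVec_mulVec, ← Matrix.transpose_mul, ← hcomm', Matrix.transpose_mul,
          ← Matrix.mulVec_mulVec, hμ']
      rw [Matrix.mulVec_add, Matrix.mulVec_add, e1, e2]
      linear_combination eq2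
    have hmem2 : (b + f0ᵀ *ᵥ μ + f0'ᵀ *ᵥ μ') ∈ LinearMap.range (Matrix.mulVecLin d0ᵀ) := by
      rw [← hexact, LinearMap.mem_ker, Matrix.mulVecLin_apply]
      exact hmid
    obtain ⟨ν, hν⟩ := hmem2
    rw [Matrix.mulVecLin_apply] at hν
    refine ⟨Sum.elim (Sum.elim μ ν) μ', ?_⟩
    rw [hv]
    rw [Matrix.fromBlocks_transpose, Matrix.fromBlocks_transpose,
      Matrix.transpose_fromRows, Matrix.transpose_fromCols]
    funext x
    rcases x with (i | i) | i
    · simp only [Matrix.fromBlocks_mulVec, Matrix.fromCols_mulVec_sumElim,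
        Matrix.fromRows_mulVec, Matrix.transpose_zero, Matrix.zero_mulVec, Pi.add_apply,
        Sum.elim_inl, Sum.elim_inr, Pi.zero_apply, Sum.elim_comp_inl, Sum.elim_comp_inr, hμ]
      simp [hμ]
    · simp only [Matrix.fromBlocks_mulVec, Matrix.fromCols_mulVec_sumElim,
        Matrix.fromRows_mulVec, Matrix.transpose_zero, Matrix.zero_mulVec, Pi.add_apply,
        Sum.elim_inl, Sum.elim_inr, Pi.zero_apply, Sum.elim_comp_inl, Sum.elim_comp_inr,
        add_zero, zero_add]
      have hh := congrFun hν i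
      simp only [Pi.add_apply] at hh
      exact char2_cancel _ _ _ _ hh
    · simp only [Matrix.fromBlocks_mulVec, Matrix.fromCols_mulVec_sumElim,
        Matrix.fromRows_mulVec, Matrix.transpose_zero, Matrix.zero_mulVec, Pi.add_apply,
        Sum.elim_inl, Sum.elim_inr, Pi.zero_apply, Sum.elim_comp_inl, Sum.elim_comp_inr,
        add_zero, zero_add]
      exact congrFun hμ' i
  · -- nontrivial case
    push_neg at hc
    obtain ⟨i0, hi0⟩ := hc
    have hna : ¬ ∃ μ : Fin sZ → ZMod 2, HZᵀ.mulVec μ = a := by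
      rintro ⟨μ, hμ⟩
      apply hi0
      rw [← hμ, Matrix.dotProduct_mulVec, Matrix.vecMul_transpose, hmem i0, zero_dotProduct]
    have hnc : ¬ ∃ μ' : Fin sZ' → ZMod 2, HZ'ᵀ.mulVec μ' = c := by
      rintro ⟨μ', hμ'⟩
      apply hi0
      rw [keyε i0, ← hμ', Matrix.dotProduct_mulVec, Matrix.vecMul_transpose, hmem' i0,
        zero_dotProduct]
    have h1 : sInf {t | ∃ u : Fin n → ZMod 2, HX.mulVec u = 0 ∧
        (¬ ∃ μ : Fin sZ → ZMod 2, HZᵀ.mulVec μ = u) ∧ hammingNorm u = t} ≤ hammingNorm a :=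
      Nat.sInf_le ⟨a, eq1, hna, rfl⟩
    have h2 : sInf {t | ∃ u : Fin n' → ZMod 2, HX'.mulVec u = 0 ∧
        (¬ ∃ μ : Fin sZ' → ZMod 2, HZ'ᵀ.mulVec μ = u) ∧ hammingNorm u = t} ≤ hammingNorm c :=
      Nat.sInf_le ⟨c, eq3, hnc, rfl⟩
    have h3 : hammingNorm v = hammingNorm a + hammingNorm b + hammingNorm c := by
      rw [hv, hn_elim, hn_elim]
    omega
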